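/- For (d,k,l,r)-constrained binary sequences of length n, the minimal achievable weight is: 0 if n ≤ min(l,r); 1 if min(l,r) < n ≤ l+r+1; and ⌈(n-l-r-1)/(k+1)⌉ + 1 if n > l+r+1. The maximal achievable weight is ⌈n/(d+1)⌉. -/

import Mathlib

/-- Weight of a binary sequence: number of ones. -/
def wt (l : List Bool) : ℕ := l.count true

/-- Length of the leading run of zeros. -/
def leadZeros (l : List Bool) : ℕ := (l.takeWhile (fun b => !b)).length

/-- Length of the trailing run of zeros. -/
def trailZeros (l : List Bool) : ℕ := (l.reverse.takeWhile (fun b => !b)).length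

/-- Every internal run of zeros (between two consecutive ones) has length in `[d, k]`. -/
def internalOK (d k : ℕ) (l : List Bool) : Prop :=
  ∀ i j : ℕ, i < j → j < l.length → l.getD i false = true → l.getD j false = true →
    (∀ m, i < m → m < j → l.getD m false = false) →
    d ≤ j - i - 1 ∧ j - i - 1 ≤ k

/-- NRZI charge accumulator: current bipolar level `z`, remaining bits. -/
def chargeAux : ℤ → List Bool → ℤ
  | _, [] => 0
  | z, b :: t => (if b then -z else z) + chargeAux (if b then -z else z) t

/-- NRZI charge (digital sum) of a binary sequence. -/
def charge (l : List Bool) : ℤ := chargeAux 1 l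

/-- Number of (d,k,r)-sequences of length n and weight ν beginning with a one
(the empty sequence is allowed, giving `A 0 0 = 1`). -/
noncomputable def Adkr (d k r n ν : ℕ) : ℕ :=
  Nat.card {l : List Bool // l.length = n ∧ (l ≠ [] → l.head? = some true) ∧
    internalOK d k l ∧ trailZeros l ≤ r ∧ wt l = ν}

/-- Number of (d,k,l,r)-sequences of length n and weight ν. -/
noncomputable def Adklr (d k L r n ν : ℕ) : ℕ :=
  Nat.card {x : List Bool // x.length = n ∧ leadZeros x ≤ L ∧
    internalOK d k x ∧ trailZeros x ≤ r ∧ wt x = ν}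

/-- Number of (d,k,r)-sequences of length n beginning with a one, with NRZI charge σ. -/
noncomputable def Cdkr (d k r n : ℕ) (σ : ℤ) : ℕ :=
  Nat.card {l : List Bool // l.length = n ∧ (l ≠ [] → l.head? = some true) ∧
    internalOK d k l ∧ trailZeros l ≤ r ∧ charge l = σ}

/-- Number of (d,k,l,r)-sequences of length n with NRZI charge σ. -/
noncomputable def Cdklr (d k L r n : ℕ) (σ : ℤ) : ℕ :=
  Nat.card {x : List Bool // x.length = n ∧ leadZeros x ≤ L ∧
    internalOK d k x ∧ trailZeros x ≤ r ∧ charge x = σ}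

/-- Binomial coefficient with integer upper argument; zero when the upper argument is negative. -/
def ibin (a : ℤ) (b : ℕ) : ℤ := if 0 ≤ a then (a.toNat.choose b : ℤ) else 0

lemma getD_rep (n i : ℕ) (a b : Bool) : (List.replicate n a).getD i b = if i < n then a else b := by
  simp [List.getD, List.getElem?_replicate]; split <;> simp

lemma getD_prefix (a : ℕ) (y : List Bool) (m : ℕ) :
    (List.replicate a false ++ y).getD m false =
      if m < a then false else y.getD (m - a) false := by
  by_cases h : m < a
  · rw [List.getD_append _ _ _ _ (by simpa using h), getD_rep]; simp [h]
  · rw [List.getD_append_right _ _ _ _ (by simpa using not_lt.mp h)]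
    simp [h]

lemma getD_shape (g : ℕ) (y : List Bool) (m : ℕ) :
    (true :: (List.replicate g false ++ y)).getD m false =
      if m = 0 then true else if m ≤ g then false else y.getD (m - g - 1) false := by
  cases m with
  | zero => simp
  | succ m =>
    simp only [List.getD_cons_succ, getD_prefix]
    by_cases h : m < g
    · simp only [if_pos h]
      rw [if_neg (by omega), if_pos (by omega)]
    · simp only [if_neg h]
      rw [if_neg (by omega), if_neg (by omega)]
      congr 1; omega

lemma internalOK_prefix {d k : ℕ} (a : ℕ) {y : List Bool} :
    internalOK d k (List.replicate a false ++ y) ↔ internalOK d k y := by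
  constructor
  · intro h i j hij hj hti htj hbet
    have := h (i + a) (j + a) (by omega) (by simp [List.length_replicate]; omega)
      (by rw [getD_prefix, if_neg (by omega)]; simpa using hti)
      (by rw [getD_prefix, if_neg (by omega)]; simpa using htj)
      (by intro m h1 h2
          rw [getD_prefix]
          by_cases hm : m < a
          · rw [if_pos hm]
          · rw [if_neg hm]
            have := hbet (m - a) (by omega) (by omega); simpa using this)
    omega
  · intro h i j hij hj hti htj hbet
    rw [getD_prefix] at hti htj
    have hia : ¬ i < a := by intro hia; rw [if_pos hia] at hti; exact absurd hti (by simp)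
    have hja : ¬ j < a := by intro hja; rw [if_pos hja] at htj; exact absurd htj (by simp)
    rw [if_neg hia] at hti; rw [if_neg hja] at htj
    simp only [List.length_append, List.length_replicate] at hj
    have := h (i - a) (j - a) (by omega) (by omega) hti htj
      (by intro m h1 h2
          have h3 := hbet (m + a) (by omega) (by omega)
          rw [getD_prefix, if_neg (by omega)] at h3
          simpa using h3)
    omega

lemma internalOK_cons {d k : ℕ} (g : ℕ) {y : List Bool} (hy : y.getD 0 false = true)
    (hok : internalOK d k y) (hd : d ≤ g) (hg : g ≤ k) :
    internalOK d k (true :: (List.replicate g false ++ y)) := by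
  intro i j hij hj hti htj hbet
  rw [getD_shape] at hti htj
  simp only [List.length_cons, List.length_append, List.length_replicate] at hj
  have hj0 : j ≠ 0 := by omega
  rw [if_neg hj0] at htj
  have hjg : ¬ j ≤ g := by intro hjg; rw [if_pos hjg] at htj; exact absurd htj (by simp)
  rw [if_neg hjg] at htj
  by_cases hi0 : i = 0
  · subst hi0
    by_cases hj1 : j = g + 1
    · subst hj1; constructor <;> omega
    · exfalso
      have h3 := hbet (g + 1) (by omega) (by omega)
      rw [getD_shape, if_neg (by omega), if_neg (by omega)] at h3
      have e : g + 1 - g - 1 = 0 := by omega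
      rw [e, hy] at h3; exact absurd h3 (by simp)
  · rw [if_neg hi0] at hti
    have hig : ¬ i ≤ g := by intro hig; rw [if_pos hig] at hti; exact absurd hti (by simp)
    rw [if_neg hig] at hti
    have := hok (i - g - 1) (j - g - 1) (by omega) (by omega) hti htj
      (by intro m h1 h2
          have h3 := hbet (m + g + 1) (by omega) (by omega)
          rw [getD_shape, if_neg (by omega), if_neg (by omega)] at h3
          have e : m + g + 1 - g - 1 = m := by omega
          rwa [e] at h3)
    omega

lemma internalOK_cons_elim {d k : ℕ} (g : ℕ) {y : List Bool} (hy : y.getD 0 false = true)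
    (hylen : 0 < y.length)
    (hok : internalOK d k (true :: (List.replicate g false ++ y))) :
    (d ≤ g ∧ g ≤ k) ∧ internalOK d k y := by
  constructor
  · have := hok 0 (g + 1) (by omega)
      (by simp only [List.length_cons, List.length_append, List.length_replicate]; omega)
      (by simp)
      (by rw [getD_shape, if_neg (by omega), if_neg (by omega)]
          have e : g + 1 - g - 1 = 0 := by omega
          rwa [e])
      (by intro m h1 h2
          rw [getD_shape, if_neg (by omega), if_pos (by omega)])
    omega
  · intro i j hij hj hti htj hbet
    have := hok (i + g + 1) (j + g + 1) (by omega)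
      (by simp only [List.length_cons, List.length_append, List.length_replicate]; omega)
      (by rw [getD_shape, if_neg (by omega), if_neg (by omega)]
          have e : i + g + 1 - g - 1 = i := by omega
          rwa [e])
      (by rw [getD_shape, if_neg (by omega), if_neg (by omega)]
          have e : j + g + 1 - g - 1 = j := by omega
          rwa [e])
      (by intro m h1 h2
          rw [getD_shape, if_neg (by omega), if_neg (by omega)]
          exact hbet (m - g - 1) (by omega) (by omega))
    omega

lemma takeWhile_append_all {α} (p : α → Bool) (A B : List α) (h : ∀ a ∈ A, p a = true) :
    List.takeWhile p (A ++ B) = A ++ List.takeWhile p B := by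
  induction A with
  | nil => simp
  | cons a t ih =>
    rw [List.cons_append, List.takeWhile_cons, if_pos (h a (by simp))]
    rw [ih (fun a ha => h a (by simp [ha])), List.cons_append]

lemma takeWhile_append_ex {α} (p : α → Bool) (A B : List α) (h : ∃ a ∈ A, p a = false) :
    List.takeWhile p (A ++ B) = List.takeWhile p A := by
  induction A with
  | nil => obtain ⟨a, ha, _⟩ := h; simp at ha
  | cons a t ih =>
    rw [List.cons_append, List.takeWhile_cons, List.takeWhile_cons]
    by_cases hpa : p a = true
    · rw [if_pos hpa, if_pos hpa, ih]
      obtain ⟨b, hb, hpb⟩ := h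
      rcases List.mem_cons.mp hb with rfl | hbt
      · rw [hpa] at hpb; exact absurd hpb (by simp)
      · exact ⟨b, hbt, hpb⟩
    · rw [if_neg hpa, if_neg hpa]

lemma trailZeros_append (u v : List Bool) (hv : true ∈ v) :
    trailZeros (u ++ v) = trailZeros v := by
  unfold trailZeros
  rw [List.reverse_append, takeWhile_append_ex _ _ _ ⟨true, by simpa using hv, rfl⟩]

lemma trailZeros_true_rep (c : ℕ) : trailZeros (true :: List.replicate c false) = c := by
  unfold trailZeros
  rw [List.reverse_cons, List.reverse_replicate,
    takeWhile_append_all _ _ _ (fun a ha => by simp [List.eq_of_mem_replicate ha])]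
  simp

lemma leadZeros_rep_true (a : ℕ) (z : List Bool) :
    leadZeros (List.replicate a false ++ true :: z) = a := by
  unfold leadZeros
  rw [takeWhile_append_all _ _ _ (fun b hb => by simp [List.eq_of_mem_replicate hb])]
  simp

def mk1 : List ℕ → ℕ → List Bool
  | [], c => true :: List.replicate c false
  | g :: gs, c => true :: (List.replicate g false ++ mk1 gs c)

lemma mk1_shape (gs : List ℕ) (c : ℕ) : ∃ t, mk1 gs c = true :: t := by
  cases gs <;> exact ⟨_, rfl⟩

lemma mk1_getD0 (gs : List ℕ) (c : ℕ) : (mk1 gs c).getD 0 false = true := by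
  obtain ⟨t, ht⟩ := mk1_shape gs c; rw [ht]; rfl

lemma mk1_len (gs : List ℕ) (c : ℕ) : (mk1 gs c).length = 1 + gs.length + gs.sum + c := by
  induction gs with
  | nil => simp [mk1]; omega
  | cons g gs ih => simp [mk1, ih]; omega

lemma mk1_mem (gs : List ℕ) (c : ℕ) : true ∈ mk1 gs c := by
  obtain ⟨t, ht⟩ := mk1_shape gs c; rw [ht]; simp

lemma mk1_wt (gs : List ℕ) (c : ℕ) : wt (mk1 gs c) = gs.length + 1 := by
  induction gs with
  | nil => simp [mk1, wt, List.count_cons, List.count_replicate]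
  | cons g gs ih =>
    unfold wt at *
    simp [mk1, List.count_cons, List.count_append, List.count_replicate, ih]

lemma mk1_trail (gs : List ℕ) (c : ℕ) : trailZeros (mk1 gs c) = c := by
  induction gs with
  | nil => exact trailZeros_true_rep c
  | cons g gs ih =>
    show trailZeros ([true] ++ (List.replicate g false ++ mk1 gs c)) = c
    rw [trailZeros_append _ _ (by simp [mk1_mem]),
        trailZeros_append _ _ (mk1_mem gs c), ih]

lemma mk1_internalOK {d k : ℕ} (gs : List ℕ) (c : ℕ) (h : ∀ g ∈ gs, d ≤ g ∧ g ≤ k) :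
    internalOK d k (mk1 gs c) := by
  induction gs with
  | nil =>
    intro i j hij hj hti htj hbet
    exfalso
    have hf : (mk1 [] c).getD j false = false := by
      show (true :: List.replicate c false).getD j false = false
      cases j with
      | zero => omega
      | succ j => rw [List.getD_cons_succ, getD_rep]; split <;> rfl
    rw [htj] at hf; exact absurd hf (by simp)
  | cons g gs ih =>
    exact internalOK_cons g (mk1_getD0 gs c)
      (ih (fun g hg => h g (by simp [hg]))) (h g (by simp)).1 (h g (by simp)).2

lemma gaps_exist (d k : ℕ) (hk : d ≤ k) : ∀ m S, m * d ≤ S → S ≤ m * k →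
    ∃ gs : List ℕ, gs.length = m ∧ gs.sum = S ∧ ∀ g ∈ gs, d ≤ g ∧ g ≤ k := by
  intro m
  induction m with
  | zero =>
    intro S h1 h2
    simp only [Nat.zero_mul] at h1 h2
    exact ⟨[], rfl, by simp; omega, by simp⟩
  | succ m ih =>
    intro S h1 h2
    have hPQ : m * d ≤ m * k := Nat.mul_le_mul_left m hk
    have e1 : (m + 1) * d = m * d + d := by ring
    have e2 : (m + 1) * k = m * k + k := by ring
    rw [e1] at h1; rw [e2] at h2
    set g := min k (S - m * d) with hgdef
    have hg1 : d ≤ g := by omega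
    have hg2 : g ≤ k := by omega
    have hr1 : m * d ≤ S - g := by omega
    have hr2 : S - g ≤ m * k := by omega
    obtain ⟨gs, hlen, hsum, hmem⟩ := ih (S - g) hr1 hr2
    refine ⟨g :: gs, by simp [hlen], by simp [hsum]; omega, ?_⟩
    intro x hx
    rcases List.mem_cons.mp hx with rfl | hx
    · exact ⟨hg1, hg2⟩
    · exact hmem x hx

lemma constr_mem {d k L r n : ℕ} (hk : d ≤ k) (m : ℕ)
    (h1 : m * (d + 1) + 1 ≤ n) (h2 : n ≤ m * (k + 1) + 1 + L + r) :
    ∃ x : List Bool, x.length = n ∧ leadZeros x ≤ L ∧ internalOK d k x ∧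
      trailZeros x ≤ r ∧ wt x = m + 1 := by
  have hPQ : m * d ≤ m * k := Nat.mul_le_mul_left m hk
  have e1 : m * (d + 1) = m * d + m := by ring
  have e2 : m * (k + 1) = m * k + m := by ring
  rw [e1] at h1; rw [e2] at h2
  obtain ⟨S, a, c, hS1, hS2, ha, hc, htot⟩ :
      ∃ S a c, m * d ≤ S ∧ S ≤ m * k ∧ a ≤ L ∧ c ≤ r ∧ a + c + S + m + 1 = n := by
    refine ⟨min (n - 1 - m) (m * k),
      min L (n - 1 - m - min (n - 1 - m) (m * k)),
      n - 1 - m - min (n - 1 - m) (m * k) - min L (n - 1 - m - min (n - 1 - m) (m * k)),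
      ?_, ?_, ?_, ?_, ?_⟩ <;> omega
  obtain ⟨gs, hlen, hsum, hmem⟩ := gaps_exist d k hk m S hS1 hS2
  refine ⟨List.replicate a false ++ mk1 gs c, ?_, ?_, ?_, ?_, ?_⟩
  · simp [mk1_len, hlen, hsum]; omega
  · obtain ⟨t, ht⟩ := mk1_shape gs c
    rw [ht, leadZeros_rep_true]; exact ha
  · exact (internalOK_prefix a).mpr (mk1_internalOK gs c hmem)
  · rw [trailZeros_append _ _ (mk1_mem gs c), mk1_trail]; exact hc
  · unfold wt
    rw [List.count_append]
    have : wt (mk1 gs c) = m + 1 := by rw [mk1_wt, hlen]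
    unfold wt at this
    rw [this, List.count_replicate]
    simp

lemma wt_zero (x : List Bool) (h : wt x = 0) : x = List.replicate x.length false := by
  apply List.eq_replicate_of_mem
  intro b hb
  cases b
  · rfl
  · exfalso; rw [wt, List.count_eq_zero] at h; exact h hb

lemma leadZeros_rep (n : ℕ) : leadZeros (List.replicate n false) = n := by
  unfold leadZeros; rw [List.takeWhile_replicate]; simp

lemma trailZeros_rep (n : ℕ) : trailZeros (List.replicate n false) = n := by
  unfold trailZeros; rw [List.reverse_replicate, List.takeWhile_replicate]; simp

lemma internalOK_rep (d k n : ℕ) : internalOK d k (List.replicate n false) := by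
  intro i j hij hj hti htj hbet
  rw [getD_rep] at htj
  exfalso; revert htj; split <;> simp

lemma true_mem_of_wt (x : List Bool) (h : wt x ≠ 0) : true ∈ x := by
  by_contra hc; exact h (List.count_eq_zero.mpr hc)

lemma decomp_first_one (y : List Bool) (hy : true ∈ y) :
    ∃ g z, y = List.replicate g false ++ (true :: z) := by
  have hsplit := List.takeWhile_append_dropWhile (p := fun b => !b) (l := y)
  have hall : ∀ b ∈ y.takeWhile (fun b => !b), b = false := by
    intro b hb
    have := List.mem_takeWhile_imp hb
    simpa using this
  have htw : y.takeWhile (fun b => !b)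
      = List.replicate (y.takeWhile (fun b => !b)).length false :=
    List.eq_replicate_of_mem hall
  cases hdw : y.dropWhile (fun b => !b) with
  | nil =>
    exfalso
    rw [hdw, List.append_nil] at hsplit
    have : (true : Bool) = false := hall true (by rw [hsplit]; exact hy)
    simp at this
  | cons b z =>
    have hb : (fun b => !b) b = false := by
      have h2 := List.head_dropWhile_not (fun b => !b) (l := y) (by rw [hdw]; simp)
      have h3 : (y.dropWhile (fun b => !b)).head (by rw [hdw]; simp) = b := by
        simp [hdw]
      rwa [h3] at h2
    have hbt : b = true := by simpa using hb
    subst hbt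
    exact ⟨_, z, by rw [← hsplit, htw, hdw]⟩

lemma boundsA {d k r : ℕ} : ∀ m (x : List Bool), x.getD 0 false = true → internalOK d k x →
    trailZeros x ≤ r → wt x = m + 1 →
    m * (d + 1) + 1 ≤ x.length ∧ x.length ≤ m * (k + 1) + 1 + r := by
  intro m
  induction m with
  | zero =>
    intro x h0 hok htr hwt
    obtain ⟨t, rfl⟩ : ∃ t, x = true :: t := by
      cases x with
      | nil => simp [List.getD] at h0
      | cons b t =>
        rw [List.getD_cons_zero] at h0; subst h0; exact ⟨t, rfl⟩
    have hwt' : wt t = 0 := by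
      unfold wt at hwt ⊢; simp [List.count_cons] at hwt; omega
    have ht := wt_zero t hwt'
    rw [ht] at htr
    rw [trailZeros_true_rep] at htr
    simp; omega
  | succ m ih =>
    intro x h0 hok htr hwt
    obtain ⟨y, rfl⟩ : ∃ y, x = true :: y := by
      cases x with
      | nil => simp [List.getD] at h0
      | cons b t =>
        rw [List.getD_cons_zero] at h0; subst h0; exact ⟨t, rfl⟩
    have hwty : wt y = m + 1 := by
      unfold wt at hwt ⊢; simp [List.count_cons] at hwt; omega
    obtain ⟨g, z, rfl⟩ := decomp_first_one y (true_mem_of_wt y (by omega))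
    obtain ⟨⟨hgd, hgk⟩, hok'⟩ :=
      internalOK_cons_elim g (by rw [List.getD_cons_zero]) (by simp) hok
    have htr' : trailZeros (true :: z) ≤ r := by
      have : (true :: (List.replicate g false ++ true :: z))
          = ([true] ++ List.replicate g false) ++ (true :: z) := by simp
      rw [this, trailZeros_append _ _ (by simp)] at htr
      exact htr
    have hwt' : wt (true :: z) = m + 1 := by
      unfold wt at hwty ⊢
      simp [List.count_append, List.count_replicate] at hwty ⊢
      omega
    have hb := ih (true :: z) (by rw [List.getD_cons_zero]) hok' htr' hwt'
    simp only [List.length_cons, List.length_append, List.length_replicate] at hb ⊢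
    have e1 : (m + 1) * (d + 1) = m * (d + 1) + (d + 1) := by ring
    have e2 : (m + 1) * (k + 1) = m * (k + 1) + (k + 1) := by ring
    rw [e1, e2]
    omega

lemma boundsFull {d k L r : ℕ} (x : List Bool) (m : ℕ) (hL : leadZeros x ≤ L)
    (hok : internalOK d k x) (htr : trailZeros x ≤ r) (hwt : wt x = m + 1) :
    m * (d + 1) + 1 ≤ x.length ∧ x.length ≤ m * (k + 1) + 1 + L + r := by
  obtain ⟨g, z, rfl⟩ := decomp_first_one x (true_mem_of_wt x (by omega))
  rw [leadZeros_rep_true] at hL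
  have hok' := (internalOK_prefix g).mp hok
  have htr' : trailZeros (true :: z) ≤ r := by
    rwa [trailZeros_append _ _ (by simp)] at htr
  have hwt' : wt (true :: z) = m + 1 := by
    unfold wt at hwt ⊢
    simp [List.count_append, List.count_replicate] at hwt ⊢
    omega
  have hb := boundsA m (true :: z) (by rw [List.getD_cons_zero]) hok' htr' hwt'
  simp only [List.length_cons, List.length_append, List.length_replicate] at hb ⊢
  omega

lemma divF1 (M k : ℕ) : M ≤ ((M + k) / (k + 1)) * (k + 1) := by
  have h1 := Nat.div_add_mod (M + k) (k + 1)
  have h2 : (M + k) % (k + 1) < k + 1 := Nat.mod_lt _ (by omega)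
  rw [Nat.mul_comm]
  generalize hp : (k + 1) * ((M + k) / (k + 1)) = P at *
  omega

lemma divF2 (M k mm : ℕ) (h : M ≤ mm * (k + 1)) : (M + k) / (k + 1) ≤ mm := by
  have : (M + k) / (k + 1) < mm + 1 := by
    rw [Nat.div_lt_iff_lt_mul (by omega : 0 < k + 1)]
    have e : (mm + 1) * (k + 1) = mm * (k + 1) + (k + 1) := by ring
    rw [e]
    generalize mm * (k + 1) = P at *
    omega
  omega

theorem auxStmt14 (d k L r n : ℕ) (hk : d ≤ k)
    (hex : ∃ x : List Bool, x.length = n ∧ leadZeros x ≤ L ∧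
      internalOK d k x ∧ trailZeros x ≤ r) :
    sInf {ν : ℕ | ∃ x : List Bool, x.length = n ∧ leadZeros x ≤ L ∧
        internalOK d k x ∧ trailZeros x ≤ r ∧ wt x = ν} =
      (if n ≤ min L r then 0 else if n ≤ L + r + 1 then 1
       else (n - L - r - 1 + k) / (k + 1) + 1) ∧
    sSup {ν : ℕ | ∃ x : List Bool, x.length = n ∧ leadZeros x ≤ L ∧
        internalOK d k x ∧ trailZeros x ≤ r ∧ wt x = ν} = (n + d) / (d + 1) := by
  set S := {ν : ℕ | ∃ x : List Bool, x.length = n ∧ leadZeros x ≤ L ∧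
      internalOK d k x ∧ trailZeros x ≤ r ∧ wt x = ν} with hSdef
  obtain ⟨x0, hx0len, hx0L, hx0ok, hx0tr⟩ := hex
  have hν0 : wt x0 ∈ S := ⟨x0, hx0len, hx0L, hx0ok, hx0tr, rfl⟩
  have hSne : S.Nonempty := ⟨_, hν0⟩
  have hmemB : ∀ ν ∈ S, (ν = 0 → n ≤ L ∧ n ≤ r) ∧
      ∀ m, ν = m + 1 → m * (d + 1) + 1 ≤ n ∧ n ≤ m * (k + 1) + 1 + L + r := by
    rintro ν ⟨x, hlen, hLx, hokx, htrx, hwtx⟩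
    constructor
    · rintro rfl
      have hx := wt_zero x hwtx
      rw [hx, leadZeros_rep, hlen] at hLx
      rw [hx, trailZeros_rep, hlen] at htrx
      exact ⟨hLx, htrx⟩
    · rintro m rfl
      have := boundsFull x m hLx hokx htrx hwtx
      rwa [hlen] at this
  have hmemC : ∀ m, m * (d + 1) + 1 ≤ n → n ≤ m * (k + 1) + 1 + L + r → (m + 1) ∈ S :=
    fun m h1 h2 => constr_mem hk m h1 h2
  -- upper bound for sSup
  have key0 : ∀ ν ∈ S, ν ≤ (n + d) / (d + 1) := by
    intro ν hν
    cases ν with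
    | zero => exact Nat.zero_le _
    | succ m =>
      have h1 := ((hmemB _ hν).2 m rfl).1
      have hn1 : 1 ≤ n := by
        generalize m * (d + 1) = P at h1; omega
      have hm : m ≤ (n - 1) / (d + 1) :=
        (Nat.le_div_iff_mul_le (by omega : 0 < d + 1)).mpr (by
          generalize hp : m * (d + 1) = P at *; omega)
      have e : n + d = (n - 1) + (d + 1) := by omega
      rw [e, Nat.add_div_right _ (by omega : 0 < d + 1)]
      omega
  have hbdd : BddAbove S := ⟨(n + d) / (d + 1), fun ν hν => key0 ν hν⟩
  constructor
  · -- sInf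
    by_cases hc1 : n ≤ min L r
    · rw [if_pos hc1]
      apply Nat.sInf_eq_zero.mpr
      left
      exact ⟨List.replicate n false, by simp, by rw [leadZeros_rep]; omega,
        internalOK_rep d k n, by rw [trailZeros_rep]; omega, by
          unfold wt; rw [List.count_replicate]; simp⟩
    · rw [if_neg hc1]
      have hpos : ∀ ν ∈ S, 1 ≤ ν := by
        intro ν hν
        rcases Nat.eq_zero_or_pos ν with rfl | h
        · have := (hmemB 0 hν).1 rfl; omega
        · omega
      by_cases hc2 : n ≤ L + r + 1
      · rw [if_pos hc2]
        have h1 : (1 : ℕ) ∈ S := by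
          have := hmemC 0 (by omega) (by simp; omega)
          simpa using this
        exact le_antisymm (Nat.sInf_le h1) (hpos _ (Nat.sInf_mem hSne))
      · rw [if_neg hc2]
        set M := n - L - r - 1 with hM
        set q := (M + k) / (k + 1) with hq
        have hlow : ∀ ν ∈ S, q + 1 ≤ ν := by
          intro ν hν
          cases ν with
          | zero => exact absurd ((hmemB 0 hν).1 rfl) (by omega)
          | succ m =>
            have h2 := ((hmemB _ hν).2 m rfl).2
            have : M ≤ m * (k + 1) := by
              generalize m * (k + 1) = P at *; omega
            have := divF2 M k m this
            omega
        have hmem : q + 1 ∈ S := by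
          apply hmemC
          · -- q * (d+1) + 1 ≤ n, via ν0
            cases hwx : wt x0 with
            | zero =>
              rw [hwx] at hν0
              exact absurd ((hmemB 0 hν0).1 rfl) (by omega)
            | succ m0 =>
              rw [hwx] at hν0
              obtain ⟨hB1, hB2⟩ := (hmemB _ hν0).2 m0 rfl
              have hMm : M ≤ m0 * (k + 1) := by
                generalize m0 * (k + 1) = P at *; omega
              have hqm : q ≤ m0 := divF2 M k m0 hMm
              have : q * (d + 1) ≤ m0 * (d + 1) := Nat.mul_le_mul_right _ hqm
              generalize q * (d + 1) = P at *
              generalize m0 * (d + 1) = Q at *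
              omega
          · -- n ≤ q * (k+1) + 1 + L + r
            have := divF1 M k
            rw [← hq] at this
            generalize q * (k + 1) = P at *
            omega
        exact le_antisymm (Nat.sInf_le hmem) (hlow _ (Nat.sInf_mem hSne))
  · -- sSup
    rcases Nat.eq_zero_or_pos n with rfl | hn
    · have h0 : (0 : ℕ) ∈ S :=
        ⟨[], rfl, by simp [leadZeros], internalOK_rep d k 0, by simp [trailZeros], rfl⟩
      have : (0 + d) / (d + 1) = 0 := Nat.div_eq_of_lt (by omega)
      rw [this]
      apply le_antisymm
      · apply csSup_le hSne
        intro ν hν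
        obtain ⟨x, hlen, -, -, -, hwtx⟩ := hν
        have : x = [] := List.length_eq_zero_iff.mp hlen
        rw [this] at hwtx
        simp [wt] at hwtx
        omega
      · exact le_csSup hbdd h0
    · set m := (n - 1) / (d + 1) with hm
      have hmmem : m + 1 ∈ S := by
        apply hmemC
        · have h4 := Nat.div_mul_le_self (n - 1) (d + 1)
          rw [← hm] at h4
          generalize m * (d + 1) = P at *
          omega
        · cases hwx : wt x0 with
          | zero =>
            rw [hwx] at hν0
            have := (hmemB 0 hν0).1 rfl
            have hP : 0 ≤ m * (k + 1) := Nat.zero_le _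
            generalize m * (k + 1) = P at *
            omega
          | succ m0 =>
            rw [hwx] at hν0
            obtain ⟨hB1, hB2⟩ := (hmemB _ hν0).2 m0 rfl
            have hm0 : m0 ≤ m := by
              rw [hm]
              exact (Nat.le_div_iff_mul_le (by omega : 0 < d + 1)).mpr (by
                generalize m0 * (d + 1) = P at *; omega)
            have : m0 * (k + 1) ≤ m * (k + 1) := Nat.mul_le_mul_right _ hm0
            generalize m0 * (k + 1) = P at *
            generalize m * (k + 1) = Q at *
            omega
      have e : n + d = (n - 1) + (d + 1) := by omega
      rw [e, Nat.add_div_right _ (by omega : 0 < d + 1), ← hm]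
      apply le_antisymm
      · apply csSup_le hSne
        intro ν hν
        have := key0 ν hν
        rwa [e, Nat.add_div_right _ (by omega : 0 < d + 1), ← hm] at this
      · exact le_csSup hbdd hmmem

theorem stmt14 (d k L r n : ℕ) (hk : d ≤ k)
    (hex : ∃ x : List Bool, x.length = n ∧ leadZeros x ≤ L ∧
      internalOK d k x ∧ trailZeros x ≤ r) :
    sInf {ν : ℕ | ∃ x : List Bool, x.length = n ∧ leadZeros x ≤ L ∧
        internalOK d k x ∧ trailZeros x ≤ r ∧ wt x = ν} =
      (if n ≤ min L r then 0 else if n ≤ L + r + 1 then 1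
       else (n - L - r - 1 + k) / (k + 1) + 1) ∧
    sSup {ν : ℕ | ∃ x : List Bool, x.length = n ∧ leadZeros x ≤ L ∧
        internalOK d k x ∧ trailZeros x ≤ r ∧ wt x = ν} = (n + d) / (d + 1) := by
  exact auxStmt14 d k L r n hk hex
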